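/- Any secondary structure containing motif m₅ (a tree node of degree greater than four) or motif m₃∘ (a node with at least one unpaired child and degree greater than two) is not designable over {A,U,C,G} in the Watson-Crick model. -/
import Mathlib


open scoped Classical

/-- An RNA nucleotide. -/
inductive Base | A | U | C | G
deriving DecidableEq, Inhabited, Repr

/-- The Watson-Crick pairing relation (only G-C and A-U pairs allowed). -/
def wcPair : Base → Base → Prop
  | .G, .C => True | .C, .G => True
  | .A, .U => True | .U, .A => True
  | _, _ => False

/-- The Nussinov-Jacobson pairing relation (G-C, A-U and G-U pairs allowed). -/
def njPair : Base → Base → Prop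
  | .G, .C => True | .C, .G => True
  | .A, .U => True | .U, .A => True
  | .G, .U => True | .U, .G => True
  | _, _ => False

/-- An RNA (pseudoknot-free) secondary structure, 0-indexed positions. -/
structure SecStr where
  len : ℕ
  pairs : Finset (ℕ × ℕ)
  lt : ∀ p ∈ pairs, p.1 < p.2
  ub : ∀ p ∈ pairs, p.2 < len
  once : ∀ p ∈ pairs, ∀ q ∈ pairs, p ≠ q →
    p.1 ≠ q.1 ∧ p.1 ≠ q.2 ∧ p.2 ≠ q.1 ∧ p.2 ≠ q.2
  noncross : ∀ p ∈ pairs, ∀ q ∈ pairs,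
    ¬ (p.1 < q.1 ∧ q.1 < p.2 ∧ p.2 < q.2)

def SecStr.pairedAt (S : SecStr) (i : ℕ) : Prop := ∃ p ∈ S.pairs, p.1 = i ∨ p.2 = i
def SecStr.unpairedAt (S : SecStr) (i : ℕ) : Prop := i < S.len ∧ ¬ S.pairedAt i
def SecStr.saturated (S : SecStr) : Prop := ∀ i < S.len, S.pairedAt i

/-- A structure is compatible with a sequence `w` (w.r.t. pairing relation `R`)
if it has the right length and all base pairs are `R`-valid. -/
def compat {α : Type*} [Inhabited α] (R : α → α → Prop) (w : List α) (S : SecStr) : Prop :=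
  S.len = w.length ∧ ∀ p ∈ S.pairs, R (w.getD p.1 default) (w.getD p.2 default)

/-- Base-pair-sum free energy of a structure on a sequence. -/
noncomputable def energy {α : Type*} [Inhabited α] (E : α → α → ℝ) (w : List α)
    (S : SecStr) : ℝ :=
  ∑ p ∈ S.pairs, E (w.getD p.1 default) (w.getD p.2 default)

/-- `w` is a Δ-design for `S`: `S` is compatible with `w`, and every other
compatible structure has energy at least `energy E w S + Δ`. -/
def isDesign {α : Type*} [Inhabited α] (R : α → α → Prop) (E : α → α → ℝ) (Δ : ℝ)
    (w : List α) (S : SecStr) : Prop :=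
  compat R w S ∧ ∀ S' : SecStr, compat R w S' → S' ≠ S →
    energy E w S' ≥ energy E w S + Δ

/- Tree representation machinery. -/
def encloses (q p : ℕ × ℕ) : Prop := q.1 < p.1 ∧ p.2 < q.2
def SecStr.hasParent (S : SecStr) (p : ℕ × ℕ) : Prop := ∃ q ∈ S.pairs, encloses q p
def SecStr.isParentOf (S : SecStr) (q p : ℕ × ℕ) : Prop :=
  q ∈ S.pairs ∧ p ∈ S.pairs ∧ encloses q p ∧ ¬ ∃ m ∈ S.pairs, encloses q m ∧ encloses m p

/-- Degree of a paired node: number of paired children plus one for the parent (if any). -/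
noncomputable def SecStr.pairDeg (S : SecStr) (p : ℕ × ℕ) : ℕ :=
  (S.pairs.filter (fun c => S.isParentOf p c)).card + (if S.hasParent p then 1 else 0)
/-- Degree of the virtual root: number of top-level base pairs. -/
noncomputable def SecStr.rootDeg (S : SecStr) : ℕ :=
  (S.pairs.filter (fun p => ¬ S.hasParent p)).card
/-- All nodes of the tree representation (including the virtual root) have degree ≤ d. -/
def SecStr.degLE (S : SecStr) (d : ℕ) : Prop :=
  S.rootDeg ≤ d ∧ ∀ p ∈ S.pairs, S.pairDeg p ≤ d

/-- A sequence is saturable if a saturated structure is compatible with it. -/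
def saturable {α : Type*} [Inhabited α] (R : α → α → Prop) (w : List α) : Prop :=
  ∃ S : SecStr, compat R w S ∧ S.saturated
/-- Atomic saturable: saturable, and no (nonempty) proper prefix is saturable. -/
def atomicSaturable {α : Type*} [Inhabited α] (R : α → α → Prop) (w : List α) : Prop :=
  saturable R w ∧ ∀ k, 0 < k → k < w.length → ¬ saturable R (w.take k)

/- Motifs. -/
def SecStr.unpChildOfPair (S : SecStr) (q : ℕ × ℕ) (u : ℕ) : Prop :=
  S.unpairedAt u ∧ q.1 < u ∧ u < q.2 ∧
    ¬ ∃ m ∈ S.pairs, q.1 < m.1 ∧ m.1 < u ∧ u < m.2 ∧ m.2 < q.2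
def SecStr.unpChildOfRoot (S : SecStr) (u : ℕ) : Prop :=
  S.unpairedAt u ∧ ¬ ∃ m ∈ S.pairs, m.1 < u ∧ u < m.2
/-- Motif m₅ : a tree node (possibly the root) of degree greater than four. -/
def hasM5 (S : SecStr) : Prop := 4 < S.rootDeg ∨ ∃ p ∈ S.pairs, 4 < S.pairDeg p
/-- Motif m₃∘ : a node with an unpaired child and degree greater than two. -/
def hasM3o (S : SecStr) : Prop :=
  (∃ q ∈ S.pairs, (∃ u, S.unpChildOfPair q u) ∧ 2 < S.pairDeg q) ∨
  ((∃ u, S.unpChildOfRoot u) ∧ 2 < S.rootDeg)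

/- Colorings of the tree representation. -/
inductive Col | black | white | gray
deriving DecidableEq

noncomputable def childCount (S : SecStr) (col : ℕ × ℕ → Col) (q : ℕ × ℕ) (c : Col) : ℕ :=
  (S.pairs.filter (fun p => S.isParentOf q p ∧ col p = c)).card
noncomputable def rootChildCount (S : SecStr) (col : ℕ × ℕ → Col) (c : Col) : ℕ :=
  (S.pairs.filter (fun p => ¬ S.hasParent p ∧ col p = c)).card

/-- A proper coloring of the tree representation. -/
def properCol (S : SecStr) (col : ℕ × ℕ → Col) : Prop :=
  rootChildCount S col .black ≤ 1 ∧ rootChildCount S col .white ≤ 1 ∧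
  rootChildCount S col .gray ≤ 2 ∧
  ∀ q ∈ S.pairs,
    childCount S col q .black ≤ 1 ∧ childCount S col q .white ≤ 1 ∧
    childCount S col q .gray ≤ 2 ∧
    childCount S col q (col q) ≤ 1 ∧
    (col q = .black → ∀ p ∈ S.pairs, S.isParentOf q p → col p ≠ .white) ∧
    (col q = .white → ∀ p ∈ S.pairs, S.isParentOf q p → col p ≠ .black)

/-- Level of a paired node: #black minus #white on the path to the root (incl. itself). -/
noncomputable def pairLvl (S : SecStr) (col : ℕ × ℕ → Col) (p : ℕ × ℕ) : ℤ :=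
  ((S.pairs.filter (fun q => q.1 ≤ p.1 ∧ p.2 ≤ q.2 ∧ col q = .black)).card : ℤ) -
  ((S.pairs.filter (fun q => q.1 ≤ p.1 ∧ p.2 ≤ q.2 ∧ col q = .white)).card : ℤ)
/-- Level of an unpaired node. -/
noncomputable def unpLvl (S : SecStr) (col : ℕ × ℕ → Col) (u : ℕ) : ℤ :=
  ((S.pairs.filter (fun q => q.1 < u ∧ u < q.2 ∧ col q = .black)).card : ℤ) -
  ((S.pairs.filter (fun q => q.1 < u ∧ u < q.2 ∧ col q = .white)).card : ℤ)

/-- Separated coloring: gray-node levels and unpaired-node levels are disjoint. -/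
def separatedCol (S : SecStr) (col : ℕ × ℕ → Col) : Prop :=
  ∀ p ∈ S.pairs, col p = .gray → ∀ u, S.unpairedAt u →
    pairLvl S col p ≠ unpLvl S col u

/-- A bipartite energy model: its compatibility graph is bipartite. -/
def Bipartite {α : Type*} (R : α → α → Prop) : Prop :=
  ∃ f : α → Bool, ∀ a b, R a b → f a ≠ f b

/-- The k-stutter of a sequence. -/
def stutterSeq {α : Type*} (w : List α) (k : ℕ) : List α :=
  w.flatMap (fun a => List.replicate k a)
/-- The base pairs of the k-stutter of a structure. -/
def stutterPairs (S : SecStr) (k : ℕ) : Finset (ℕ × ℕ) :=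
  S.pairs.biUnion (fun p => (Finset.range k).image
    (fun m => (k * p.1 + m, k * p.2 + (k - 1 - m))))

/-- Two base pairs belong to the same band (maximal stack) of S. -/
def sameBand (S : SecStr) (p p' : ℕ × ℕ) : Prop :=
  p ∈ S.pairs ∧ p' ∈ S.pairs ∧ p.1 + p.2 = p'.1 + p'.2 ∧
  ∀ x, min p.1 p'.1 ≤ x → x ≤ max p.1 p'.1 → (x, p.1 + p.2 - x) ∈ S.pairs

/-- Nussinov-Jacobson energies: a for G-C, b for A-U, g for G-U. -/
def njE (a b g : ℝ) : Base → Base → ℝ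
  | .G, .C => a | .C, .G => a
  | .A, .U => b | .U, .A => b
  | .G, .U => g | .U, .G => g
  | _, _ => 0

/-- level of position i : #G minus #C in the prefix of w ending at i. -/
def lvl (w : List Base) (i : ℕ) : ℤ :=
  ((w.take (i+1)).count Base.G : ℤ) - ((w.take (i+1)).count Base.C : ℤ)


/- ===== auxiliary machinery for stmt12 ===== -/

lemma wc_symm {x y : Base} (h : wcPair x y) : wcPair y x := by
  cases x <;> cases y <;> simp_all [wcPair]

def bcomp : Base → Base
  | .A => .U | .U => .A | .C => .G | .G => .C

lemma wc_bcomp (x : Base) : wcPair x (bcomp x) := by cases x <;> simp [wcPair, bcomp]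
lemma wc_bcomp' (x : Base) : wcPair (bcomp x) x := by cases x <;> simp [wcPair, bcomp]
lemma bcomp_bcomp (x : Base) : bcomp (bcomp x) = x := by cases x <;> rfl
lemma wc_eq_bcomp {x y : Base} (h : wcPair x y) : y = bcomp x := by
  cases x <;> cases y <;> simp_all [wcPair, bcomp]

def t4 : Finset (Base × Base) := {(.G, .C), (.C, .G), (.A, .U), (.U, .A)}

lemma card_t4 : t4.card = 4 := by decide

lemma mem_t4 {x y : Base} (h : wcPair x y) : (x, y) ∈ t4 := by
  cases x <;> cases y <;> (try simp [wcPair] at h) <;> decide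

def t2 (β : Base) : Finset (Base × Base) :=
  t4.filter (fun ab => ab.1 ≠ β ∧ ab.1 ≠ bcomp β)

lemma card_t2 (β : Base) : (t2 β).card = 2 := by cases β <;> decide

lemma mem_t2 {β x y : Base} (h : wcPair x y) (h1 : x ≠ β) (h2 : x ≠ bcomp β) :
    (x, y) ∈ t2 β := Finset.mem_filter.mpr ⟨mem_t4 h, h1, h2⟩

/-- `m` is nested w.r.t. `n` (inside, outside-disjoint, or strictly containing). -/
def good (m n : ℕ × ℕ) : Prop :=
  m.2 < n.1 ∨ n.2 < m.1 ∨ (m.1 < n.1 ∧ n.2 < m.2) ∨ (n.1 < m.1 ∧ m.2 < n.2)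

lemma aux_tri (S : SecStr) {p q : ℕ × ℕ} (hp : p ∈ S.pairs) (hq : q ∈ S.pairs)
    (hne : p ≠ q) :
    p.2 < q.1 ∨ q.2 < p.1 ∨ (p.1 < q.1 ∧ q.2 < p.2) ∨ (q.1 < p.1 ∧ p.2 < q.2) := by
  have h1 := S.noncross p hp q hq
  have h2 := S.noncross q hq p hp
  have h3 := S.once p hp q hq hne
  have h4 := S.lt p hp
  have h5 := S.lt q hq
  omega

lemma aux_energy (w : List Base) (S : SecStr) :
    energy (fun _ _ => (-1 : ℝ)) w S = -(S.pairs.card : ℝ) := by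
  simp [energy]

lemma buildContra (S : SecStr) (w : List Base)
    (hdes : isDesign wcPair (fun _ _ => (-1 : ℝ)) 1 w S)
    (T : Finset (ℕ × ℕ)) (hTne : T ≠ S.pairs) (hTcard : S.pairs.card ≤ T.card)
    (hlt : ∀ p ∈ T, p.1 < p.2) (hub : ∀ p ∈ T, p.2 < S.len)
    (honce : ∀ p ∈ T, ∀ q ∈ T, p ≠ q → p.1 ≠ q.1 ∧ p.1 ≠ q.2 ∧ p.2 ≠ q.1 ∧ p.2 ≠ q.2)
    (hnx : ∀ p ∈ T, ∀ q ∈ T, ¬ (p.1 < q.1 ∧ q.1 < p.2 ∧ p.2 < q.2))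
    (hcT : ∀ p ∈ T, wcPair (w.getD p.1 default) (w.getD p.2 default)) : False := by
  have hE := hdes.2 ⟨S.len, T, hlt, hub, honce, hnx⟩ ⟨hdes.1.1, hcT⟩
    (fun h => hTne (congrArg SecStr.pairs h))
  rw [aux_energy, aux_energy] at hE
  have hproj : (SecStr.mk S.len T hlt hub honce hnx).pairs = T := rfl
  rw [hproj] at hE
  have hc : (S.pairs.card : ℝ) ≤ (T.card : ℝ) := by exact_mod_cast hTcard
  linarith

lemma stealContra (S : SecStr) (w : List Base)
    (hdes : isDesign wcPair (fun _ _ => (-1 : ℝ)) 1 w S)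
    (r : ℕ × ℕ) (hr : r ∈ S.pairs) (u : ℕ) (hu : S.unpairedAt u)
    (n : ℕ × ℕ) (hnlt : n.1 < n.2) (hnub : n.2 < S.len)
    (hn1 : n.1 = u ∨ n.1 = r.1 ∨ n.1 = r.2)
    (hn2 : n.2 = u ∨ n.2 = r.1 ∨ n.2 = r.2)
    (hnu : n.1 = u ∨ n.2 = u)
    (hwc : wcPair (w.getD n.1 default) (w.getD n.2 default))
    (hsep : ∀ m ∈ S.pairs, m ≠ r → good m n) : False := by
  have hends : ∀ m ∈ S.pairs, m.1 ≠ u ∧ m.2 ≠ u := by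
    intro m hm
    constructor <;> intro hh <;> exact hu.2 ⟨m, hm, by omega⟩
  have hnpair : n ∉ S.pairs := fun hmem => by
    rcases hnu with hh | hh
    · exact (hends n hmem).1 hh
    · exact (hends n hmem).2 hh
  have hmemT : ∀ p, p ∈ insert n (S.pairs.erase r) ↔
      (p = n ∨ (p ≠ r ∧ p ∈ S.pairs)) := by
    intro p
    simp only [Finset.mem_insert, Finset.mem_erase]
  refine buildContra S w hdes (insert n (S.pairs.erase r)) ?_ ?_ ?_ ?_ ?_ ?_ ?_
  · intro h
    exact hnpair (h ▸ Finset.mem_insert_self n _)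
  · have h1 : n ∉ S.pairs.erase r := fun h => hnpair (Finset.mem_of_mem_erase h)
    rw [Finset.card_insert_of_notMem h1, Finset.card_erase_of_mem hr]
    have : 0 < S.pairs.card := Finset.card_pos.mpr ⟨r, hr⟩
    omega
  · intro p hp
    rcases (hmemT p).mp hp with rfl | ⟨_, h⟩
    · exact hnlt
    · exact S.lt p h
  · intro p hp
    rcases (hmemT p).mp hp with rfl | ⟨_, h⟩
    · exact hnub
    · exact S.ub p h
  · intro p hp q hq hpq
    rcases (hmemT p).mp hp with rfl | ⟨hpr, hpP⟩ <;>
      rcases (hmemT q).mp hq with rfl | ⟨hqr, hqP⟩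
    · exact absurd rfl hpq
    · have o1 := S.once q hqP r hr hqr
      have o2 := hends q hqP
      omega
    · have o1 := S.once p hpP r hr hpr
      have o2 := hends p hpP
      omega
    · exact S.once p hpP q hqP hpq
  · intro p hp q hq
    rcases (hmemT p).mp hp with rfl | ⟨hpr, hpP⟩ <;>
      rcases (hmemT q).mp hq with rfl | ⟨hqr, hqP⟩
    · omega
    · have := hsep q hqP hqr
      have lq := S.lt q hqP
      unfold good at this
      omega
    · have := hsep p hpP hpr
      have lp := S.lt p hpP
      unfold good at this
      omega
    · exact S.noncross p hpP q hqP
  · intro p hp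
    rcases (hmemT p).mp hp with rfl | ⟨_, hpP⟩
    · exact hwc
    · exact hdes.1.2 p hpP

lemma ne4 {x a b c d y : ℕ} (h : x = a ∨ x = b ∨ x = c ∨ x = d)
    (h1 : y ≠ a) (h2 : y ≠ b) (h3 : y ≠ c) (h4 : y ≠ d) : x ≠ y := by
  rcases h with rfl | rfl | rfl | rfl
  · exact fun hh => h1 hh.symm
  · exact fun hh => h2 hh.symm
  · exact fun hh => h3 hh.symm
  · exact fun hh => h4 hh.symm

lemma swap2Contra (S : SecStr) (w : List Base)
    (hdes : isDesign wcPair (fun _ _ => (-1 : ℝ)) 1 w S)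
    (r r' n₁ n₂ : ℕ × ℕ) (hr : r ∈ S.pairs) (hr' : r' ∈ S.pairs) (hrr : r ≠ r')
    (h1lt : n₁.1 < n₁.2) (h2lt : n₂.1 < n₂.2)
    (h1ub : n₁.2 < S.len) (h2ub : n₂.2 < S.len)
    (hm11 : n₁.1 = r.1 ∨ n₁.1 = r.2 ∨ n₁.1 = r'.1 ∨ n₁.1 = r'.2)
    (hm12 : n₁.2 = r.1 ∨ n₁.2 = r.2 ∨ n₁.2 = r'.1 ∨ n₁.2 = r'.2)
    (hm21 : n₂.1 = r.1 ∨ n₂.1 = r.2 ∨ n₂.1 = r'.1 ∨ n₂.1 = r'.2)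
    (hm22 : n₂.2 = r.1 ∨ n₂.2 = r.2 ∨ n₂.2 = r'.1 ∨ n₂.2 = r'.2)
    (hdist : n₁.1 ≠ n₂.1 ∧ n₁.1 ≠ n₂.2 ∧ n₁.2 ≠ n₂.1 ∧ n₁.2 ≠ n₂.2)
    (hnp1 : n₁ ∉ S.pairs) (hnp2 : n₂ ∉ S.pairs)
    (hwc1 : wcPair (w.getD n₁.1 default) (w.getD n₁.2 default))
    (hwc2 : wcPair (w.getD n₂.1 default) (w.getD n₂.2 default))
    (hgood12 : good n₁ n₂)
    (hsep : ∀ m ∈ S.pairs, m ≠ r → m ≠ r' → good m n₁ ∧ good m n₂) : False := by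
  have hne12 : n₁ ≠ n₂ := fun h => hdist.1 (by rw [h])
  have hmemT : ∀ p, p ∈ insert n₁ (insert n₂ ((S.pairs.erase r).erase r')) ↔
      (p = n₁ ∨ p = n₂ ∨ (p ≠ r' ∧ p ≠ r ∧ p ∈ S.pairs)) := by
    intro p
    simp only [Finset.mem_insert, Finset.mem_erase]
  refine buildContra S w hdes (insert n₁ (insert n₂ ((S.pairs.erase r).erase r')))
    ?_ ?_ ?_ ?_ ?_ ?_ ?_
  · intro h
    exact hnp1 (h ▸ Finset.mem_insert_self n₁ _)
  · have h2e : n₂ ∉ (S.pairs.erase r).erase r' :=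
      fun h => hnp2 (Finset.mem_of_mem_erase (Finset.mem_of_mem_erase h))
    have h1e : n₁ ∉ insert n₂ ((S.pairs.erase r).erase r') := by
      intro h
      rcases Finset.mem_insert.mp h with h | h
      · exact hne12 h
      · exact hnp1 (Finset.mem_of_mem_erase (Finset.mem_of_mem_erase h))
    have hr'e : r' ∈ S.pairs.erase r := Finset.mem_erase.mpr ⟨Ne.symm hrr, hr'⟩
    have hcard2 : 1 < S.pairs.card := Finset.one_lt_card.mpr ⟨r, hr, r', hr', hrr⟩
    rw [Finset.card_insert_of_notMem h1e, Finset.card_insert_of_notMem h2e,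
      Finset.card_erase_of_mem hr'e, Finset.card_erase_of_mem hr]
    omega
  · intro p hp
    rcases (hmemT p).mp hp with rfl | rfl | ⟨_, _, h⟩
    · exact h1lt
    · exact h2lt
    · exact S.lt p h
  · intro p hp
    rcases (hmemT p).mp hp with rfl | rfl | ⟨_, _, h⟩
    · exact h1ub
    · exact h2ub
    · exact S.ub p h
  · intro p hp q hq hpq
    rcases (hmemT p).mp hp with rfl | rfl | ⟨hpr', hpr, hpP⟩ <;>
      rcases (hmemT q).mp hq with rfl | rfl | ⟨hqr', hqr, hqP⟩
    · exact absurd rfl hpq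
    · exact hdist
    · have o1 := S.once q hqP r hr hqr
      have o2 := S.once q hqP r' hr' hqr'
      exact ⟨ne4 hm11 o1.1 o1.2.1 o2.1 o2.2.1,
        ne4 hm11 o1.2.2.1 o1.2.2.2 o2.2.2.1 o2.2.2.2,
        ne4 hm12 o1.1 o1.2.1 o2.1 o2.2.1,
        ne4 hm12 o1.2.2.1 o1.2.2.2 o2.2.2.1 o2.2.2.2⟩
    · exact ⟨hdist.1.symm, hdist.2.2.1.symm, hdist.2.1.symm, hdist.2.2.2.symm⟩
    · exact absurd rfl hpq
    · have o1 := S.once q hqP r hr hqr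
      have o2 := S.once q hqP r' hr' hqr'
      exact ⟨ne4 hm21 o1.1 o1.2.1 o2.1 o2.2.1,
        ne4 hm21 o1.2.2.1 o1.2.2.2 o2.2.2.1 o2.2.2.2,
        ne4 hm22 o1.1 o1.2.1 o2.1 o2.2.1,
        ne4 hm22 o1.2.2.1 o1.2.2.2 o2.2.2.1 o2.2.2.2⟩
    · have o1 := S.once p hpP r hr hpr
      have o2 := S.once p hpP r' hr' hpr'
      exact ⟨(ne4 hm11 o1.1 o1.2.1 o2.1 o2.2.1).symm,
        (ne4 hm12 o1.1 o1.2.1 o2.1 o2.2.1).symm,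
        (ne4 hm11 o1.2.2.1 o1.2.2.2 o2.2.2.1 o2.2.2.2).symm,
        (ne4 hm12 o1.2.2.1 o1.2.2.2 o2.2.2.1 o2.2.2.2).symm⟩
    · have o1 := S.once p hpP r hr hpr
      have o2 := S.once p hpP r' hr' hpr'
      exact ⟨(ne4 hm21 o1.1 o1.2.1 o2.1 o2.2.1).symm,
        (ne4 hm22 o1.1 o1.2.1 o2.1 o2.2.1).symm,
        (ne4 hm21 o1.2.2.1 o1.2.2.2 o2.2.2.1 o2.2.2.2).symm,
        (ne4 hm22 o1.2.2.1 o1.2.2.2 o2.2.2.1 o2.2.2.2).symm⟩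
    · exact S.once p hpP q hqP hpq
  · intro p hp q hq
    rcases (hmemT p).mp hp with rfl | rfl | ⟨hpr', hpr, hpP⟩ <;>
      rcases (hmemT q).mp hq with rfl | rfl | ⟨hqr', hqr, hqP⟩
    · omega
    · unfold good at hgood12; omega
    · have := hsep q hqP hqr hqr'
      have lq := S.lt q hqP
      unfold good at this
      omega
    · unfold good at hgood12; omega
    · omega
    · have := hsep q hqP hqr hqr'
      have lq := S.lt q hqP
      unfold good at this
      omega
    · have := hsep p hpP hpr hpr'
      have lp := S.lt p hpP
      unfold good at this
      omega
    · have := hsep p hpP hpr hpr'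
      have lp := S.lt p hpP
      unfold good at this
      omega
    · exact S.noncross p hpP q hqP
  · intro p hp
    rcases (hmemT p).mp hp with rfl | rfl | ⟨_, _, hpP⟩
    · exact hwc1
    · exact hwc2
    · exact hdes.1.2 p hpP


lemma mk_good' {m : ℕ × ℕ} {a b : ℕ}
    (h : m.2 < a ∨ b < m.1 ∨ (m.1 < a ∧ b < m.2) ∨ (a < m.1 ∧ m.2 < b)) :
    good m (a, b) := h

lemma encl {S : SecStr} {q c : ℕ × ℕ} (h : S.isParentOf q c) :
    q.1 < c.1 ∧ c.2 < q.2 := h.2.2.1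

lemma noInter {S : SecStr} {q c : ℕ × ℕ} (h : S.isParentOf q c) :
    ∀ m ∈ S.pairs, ¬ (q.1 < m.1 ∧ m.2 < q.2 ∧ m.1 < c.1 ∧ c.2 < m.2) := by
  intro m hm hcon
  exact h.2.2.2 ⟨m, hm, ⟨hcon.1, hcon.2.1⟩, hcon.2.2.1, hcon.2.2.2⟩

lemma caseA (S : SecStr) (w : List Base)
    (hdes : isDesign wcPair (fun _ _ => (-1 : ℝ)) 1 w S)
    (c c' : ℕ × ℕ) (hc : c ∈ S.pairs) (hc' : c' ∈ S.pairs) (hord : c.2 < c'.1)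
    (hl1 : w.getD c.1 default = w.getD c'.1 default)
    (hl2 : w.getD c.2 default = w.getD c'.2 default)
    (hsep6 : ∀ m ∈ S.pairs, m ≠ c → m ≠ c' →
      m.2 < c.1 ∨ c'.2 < m.1 ∨ (m.1 < c.1 ∧ c'.2 < m.2) ∨
      (c.1 < m.1 ∧ m.2 < c.2) ∨ (c.2 < m.1 ∧ m.2 < c'.1) ∨
      (c'.1 < m.1 ∧ m.2 < c'.2)) : False := by
  have lc := S.lt c hc
  have lc' := S.lt c' hc'
  have ubc' := S.ub c' hc'
  have hwcc := hdes.1.2 c hc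
  have hcc' : c ≠ c' := fun h => by rw [h] at hord; omega
  refine swap2Contra S w hdes c c' (c.1, c'.2) (c.2, c'.1) hc hc' hcc'
    (show c.1 < c'.2 by omega) (show c.2 < c'.1 by omega)
    (show c'.2 < S.len by omega) (show c'.1 < S.len by omega)
    (Or.inl rfl) (Or.inr (Or.inr (Or.inr rfl)))
    (Or.inr (Or.inl rfl)) (Or.inr (Or.inr (Or.inl rfl)))
    ⟨show c.1 ≠ c.2 by omega, show c.1 ≠ c'.1 by omega,
      show c'.2 ≠ c.2 by omega, show c'.2 ≠ c'.1 by omega⟩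
    ?_ ?_ ?_ ?_ ?_ ?_
  · intro hmem
    have hne : ((c.1, c'.2) : ℕ × ℕ) ≠ c := fun h => by
      have h2 : c'.2 = c.2 := (Prod.ext_iff.mp h).2
      omega
    exact (S.once _ hmem c hc hne).1 rfl
  · intro hmem
    have hne : ((c.2, c'.1) : ℕ × ℕ) ≠ c := fun h => by
      have h2 : c.2 = c.1 := (Prod.ext_iff.mp h).1
      omega
    exact (S.once _ hmem c hc hne).2.1 rfl
  · show wcPair (w.getD c.1 default) (w.getD c'.2 default)
    rw [← hl2]; exact hwcc
  · show wcPair (w.getD c.2 default) (w.getD c'.1 default)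
    rw [← hl1]; exact wc_symm hwcc
  · exact mk_good' (by omega)
  · intro m hm h1 h2
    have h6 := hsep6 m hm h1 h2
    have lm := S.lt m hm
    exact ⟨mk_good' (by omega), mk_good' (by omega)⟩

lemma caseB (S : SecStr) (w : List Base)
    (hdes : isDesign wcPair (fun _ _ => (-1 : ℝ)) 1 w S)
    (q c : ℕ × ℕ) (hq : q ∈ S.pairs) (hc : c ∈ S.pairs)
    (henc : q.1 < c.1 ∧ c.2 < q.2)
    (hl1 : w.getD c.1 default = w.getD q.2 default)
    (hl2 : w.getD c.2 default = w.getD q.1 default)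
    (hsep6 : ∀ m ∈ S.pairs, m ≠ q → m ≠ c →
      m.2 < q.1 ∨ q.2 < m.1 ∨ (m.1 < q.1 ∧ q.2 < m.2) ∨
      (q.1 < m.1 ∧ m.2 < c.1) ∨ (c.1 < m.1 ∧ m.2 < c.2) ∨
      (c.2 < m.1 ∧ m.2 < q.2)) : False := by
  have lc := S.lt c hc
  have lq := S.lt q hq
  have ubq := S.ub q hq
  have hwcq := hdes.1.2 q hq
  have hqc : q ≠ c := fun h => by rw [h] at henc; omega
  refine swap2Contra S w hdes q c (q.1, c.1) (c.2, q.2) hq hc hqc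
    (show q.1 < c.1 from henc.1) (show c.2 < q.2 from henc.2)
    (show c.1 < S.len by omega) (show q.2 < S.len from ubq)
    (Or.inl rfl) (Or.inr (Or.inr (Or.inl rfl)))
    (Or.inr (Or.inr (Or.inr rfl))) (Or.inr (Or.inl rfl))
    ⟨show q.1 ≠ c.2 by omega, show q.1 ≠ q.2 by omega,
      show c.1 ≠ c.2 by omega, show c.1 ≠ q.2 by omega⟩
    ?_ ?_ ?_ ?_ ?_ ?_
  · intro hmem
    have hne : ((q.1, c.1) : ℕ × ℕ) ≠ q := fun h => by
      have h2 : c.1 = q.2 := (Prod.ext_iff.mp h).2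
      omega
    exact (S.once _ hmem q hq hne).1 rfl
  · intro hmem
    have hne : ((c.2, q.2) : ℕ × ℕ) ≠ q := fun h => by
      have h2 : c.2 = q.1 := (Prod.ext_iff.mp h).1
      omega
    exact (S.once _ hmem q hq hne).2.2.2 rfl
  · show wcPair (w.getD q.1 default) (w.getD c.1 default)
    rw [hl1]; exact hwcq
  · show wcPair (w.getD c.2 default) (w.getD q.2 default)
    rw [hl2]; exact hwcq
  · exact mk_good' (by omega)
  · intro m hm h1 h2
    have h6 := hsep6 m hm h1 h2
    have lm := S.lt m hm
    exact ⟨mk_good' (by omega), mk_good' (by omega)⟩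

lemma sepChildren (S : SecStr) (q c c' : ℕ × ℕ)
    (h1 : S.isParentOf q c) (h2 : S.isParentOf q c') (hord : c.2 < c'.1) :
    ∀ m ∈ S.pairs, m ≠ c → m ≠ c' →
      m.2 < c.1 ∨ c'.2 < m.1 ∨ (m.1 < c.1 ∧ c'.2 < m.2) ∨
      (c.1 < m.1 ∧ m.2 < c.2) ∨ (c.2 < m.1 ∧ m.2 < c'.1) ∨
      (c'.1 < m.1 ∧ m.2 < c'.2) := by
  intro m hm hmc hmc'
  have hqP := h1.1
  have e1 := encl h1
  have e2 := encl h2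
  have lm := S.lt m hm
  have lq := S.lt q hqP
  have lc := S.lt c h1.2.1
  have lc' := S.lt c' h2.2.1
  have t1 := aux_tri S hm h1.2.1 hmc
  have t2 := aux_tri S hm h2.2.1 hmc'
  have ni1 := noInter h1 m hm
  have ni2 := noInter h2 m hm
  by_cases hmq : m = q
  · subst hmq; omega
  · have t3 := aux_tri S hm hqP hmq
    omega

lemma sepTop (S : SecStr) (c c' : ℕ × ℕ) (hc : c ∈ S.pairs) (hc' : c' ∈ S.pairs)
    (hp : ¬ S.hasParent c) (hp' : ¬ S.hasParent c') (hord : c.2 < c'.1) :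
    ∀ m ∈ S.pairs, m ≠ c → m ≠ c' →
      m.2 < c.1 ∨ c'.2 < m.1 ∨ (m.1 < c.1 ∧ c'.2 < m.2) ∨
      (c.1 < m.1 ∧ m.2 < c.2) ∨ (c.2 < m.1 ∧ m.2 < c'.1) ∨
      (c'.1 < m.1 ∧ m.2 < c'.2) := by
  intro m hm hmc hmc'
  have t1 := aux_tri S hm hc hmc
  have t2 := aux_tri S hm hc' hmc'
  have k1 : ¬(m.1 < c.1 ∧ c.2 < m.2) := fun hh => hp ⟨m, hm, hh.1, hh.2⟩
  have k2 : ¬(m.1 < c'.1 ∧ c'.2 < m.2) := fun hh => hp' ⟨m, hm, hh.1, hh.2⟩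
  have lm := S.lt m hm
  have lc := S.lt c hc
  have lc' := S.lt c' hc'
  omega

lemma sepPC (S : SecStr) (q c : ℕ × ℕ) (h : S.isParentOf q c) :
    ∀ m ∈ S.pairs, m ≠ q → m ≠ c →
      m.2 < q.1 ∨ q.2 < m.1 ∨ (m.1 < q.1 ∧ q.2 < m.2) ∨
      (q.1 < m.1 ∧ m.2 < c.1) ∨ (c.1 < m.1 ∧ m.2 < c.2) ∨
      (c.2 < m.1 ∧ m.2 < q.2) := by
  intro m hm hmq hmc
  have e := encl h
  have t1 := aux_tri S hm h.1 hmq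
  have t2 := aux_tri S hm h.2.1 hmc
  have ni := noInter h m hm
  have lm := S.lt m hm
  have lc := S.lt c h.2.1
  have lq := S.lt q h.1
  omega

lemma sepStealQ (S : SecStr) (q : ℕ × ℕ) (u : ℕ) (hq : q ∈ S.pairs)
    (hu : S.unpChildOfPair q u) (n : ℕ × ℕ)
    (hnn : n = (q.1, u) ∨ n = (u, q.2)) :
    ∀ m ∈ S.pairs, m ≠ q → good m n := by
  intro m hm hmq
  have t := aux_tri S hm hq hmq
  have f2 : ¬(q.1 < m.1 ∧ m.1 < u ∧ u < m.2 ∧ m.2 < q.2) :=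
    fun hh => hu.2.2.2 ⟨m, hm, hh⟩
  have f3 : m.1 ≠ u ∧ m.2 ≠ u :=
    ⟨fun hh => hu.1.2 ⟨m, hm, Or.inl hh⟩, fun hh => hu.1.2 ⟨m, hm, Or.inr hh⟩⟩
  have f5 : q.1 < u ∧ u < q.2 := ⟨hu.2.1, hu.2.2.1⟩
  have lm := S.lt m hm
  have lq := S.lt q hq
  rcases hnn with rfl | rfl
  · exact mk_good' (by omega)
  · exact mk_good' (by omega)

lemma sepStealC (S : SecStr) (q c : ℕ × ℕ) (u : ℕ)
    (hpc : S.isParentOf q c) (hu : S.unpChildOfPair q u) (n : ℕ × ℕ)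
    (hnn : (u < c.1 ∧ (n = (u, c.1) ∨ n = (u, c.2))) ∨
           (c.2 < u ∧ (n = (c.1, u) ∨ n = (c.2, u)))) :
    ∀ m ∈ S.pairs, m ≠ c → good m n := by
  intro m hm hmc
  have e := encl hpc
  have lc := S.lt c hpc.2.1
  have lq := S.lt q hpc.1
  have lm := S.lt m hm
  have f5 : q.1 < u ∧ u < q.2 := ⟨hu.2.1, hu.2.2.1⟩
  have t1 := aux_tri S hm hpc.2.1 hmc
  by_cases hmq : m = q
  · subst hmq
    rcases hnn with ⟨hpos, rfl | rfl⟩ | ⟨hpos, rfl | rfl⟩ <;> exact mk_good' (by omega)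
  · have t3 := aux_tri S hm hpc.1 hmq
    have ni := noInter hpc m hm
    have f2 : ¬(q.1 < m.1 ∧ m.1 < u ∧ u < m.2 ∧ m.2 < q.2) :=
      fun hh => hu.2.2.2 ⟨m, hm, hh⟩
    have f3 : m.1 ≠ u ∧ m.2 ≠ u :=
      ⟨fun hh => hu.1.2 ⟨m, hm, Or.inl hh⟩, fun hh => hu.1.2 ⟨m, hm, Or.inr hh⟩⟩
    rcases hnn with ⟨hpos, rfl | rfl⟩ | ⟨hpos, rfl | rfl⟩ <;> exact mk_good' (by omega)

lemma sepStealRoot (S : SecStr) (r : ℕ × ℕ) (u : ℕ) (hr : r ∈ S.pairs)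
    (hnp : ¬ S.hasParent r) (hu : S.unpChildOfRoot u) (n : ℕ × ℕ)
    (hnn : (u < r.1 ∧ (n = (u, r.1) ∨ n = (u, r.2))) ∨
           (r.2 < u ∧ (n = (r.1, u) ∨ n = (r.2, u)))) :
    ∀ m ∈ S.pairs, m ≠ r → good m n := by
  intro m hm hmr
  have t := aux_tri S hm hr hmr
  have k : ¬(m.1 < r.1 ∧ r.2 < m.2) := fun hh => hnp ⟨m, hm, hh.1, hh.2⟩
  have f2 : ¬(m.1 < u ∧ u < m.2) := fun hh => hu.2 ⟨m, hm, hh.1, hh.2⟩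
  have f3 : m.1 ≠ u ∧ m.2 ≠ u :=
    ⟨fun hh => hu.1.2 ⟨m, hm, Or.inl hh⟩, fun hh => hu.1.2 ⟨m, hm, Or.inr hh⟩⟩
  have lm := S.lt m hm
  have lr := S.lt r hr
  rcases hnn with ⟨hpos, rfl | rfl⟩ | ⟨hpos, rfl | rfl⟩ <;> exact mk_good' (by omega)

lemma stealNodeArc (S : SecStr) (w : List Base)
    (hdes : isDesign wcPair (fun _ _ => (-1 : ℝ)) 1 w S)
    (q : ℕ × ℕ) (hq : q ∈ S.pairs) (u : ℕ) (hu : S.unpChildOfPair q u)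
    (hend : w.getD q.1 default = bcomp (w.getD u default) ∨
            w.getD q.2 default = bcomp (w.getD u default)) : False := by
  rcases hend with hb | hb
  · refine stealContra S w hdes q hq u hu.1 (q.1, u)
      (show q.1 < u from hu.2.1) (show u < S.len from hu.1.1)
      (Or.inr (Or.inl rfl)) (Or.inl rfl) (Or.inr rfl) ?_ ?_
    · show wcPair (w.getD q.1 default) (w.getD u default)
      rw [hb]; exact wc_bcomp' _
    · exact sepStealQ S q u hq hu _ (Or.inl rfl)
  · refine stealContra S w hdes q hq u hu.1 (u, q.2)
      (show u < q.2 from hu.2.2.1) (show q.2 < S.len from S.ub q hq)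
      (Or.inl rfl) (Or.inr (Or.inr rfl)) (Or.inl rfl) ?_ ?_
    · show wcPair (w.getD u default) (w.getD q.2 default)
      rw [hb]; exact wc_bcomp _
    · exact sepStealQ S q u hq hu _ (Or.inr rfl)

lemma stealChildArc (S : SecStr) (w : List Base)
    (hdes : isDesign wcPair (fun _ _ => (-1 : ℝ)) 1 w S)
    (q c : ℕ × ℕ) (hpc : S.isParentOf q c)
    (u : ℕ) (hu : S.unpChildOfPair q u)
    (hend : w.getD c.1 default = bcomp (w.getD u default) ∨
            w.getD c.2 default = bcomp (w.getD u default)) : False := by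
  have hcP := hpc.2.1
  have e := encl hpc
  have lc := S.lt c hcP
  have ubc := S.ub c hcP
  have f3 : c.1 ≠ u ∧ c.2 ≠ u :=
    ⟨fun hh => hu.1.2 ⟨c, hcP, Or.inl hh⟩, fun hh => hu.1.2 ⟨c, hcP, Or.inr hh⟩⟩
  have f2 : ¬(q.1 < c.1 ∧ c.1 < u ∧ u < c.2 ∧ c.2 < q.2) :=
    fun hh => hu.2.2.2 ⟨c, hcP, hh⟩
  have f5 : q.1 < u ∧ u < q.2 := ⟨hu.2.1, hu.2.2.1⟩
  have hpos : u < c.1 ∨ c.2 < u := by omega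
  rcases hpos with hpos | hpos <;> rcases hend with hb | hb
  · refine stealContra S w hdes c hcP u hu.1 (u, c.1)
      (show u < c.1 from hpos) (show c.1 < S.len by omega)
      (Or.inl rfl) (Or.inr (Or.inl rfl)) (Or.inl rfl) ?_ ?_
    · show wcPair (w.getD u default) (w.getD c.1 default)
      rw [hb]; exact wc_bcomp _
    · exact sepStealC S q c u hpc hu _ (Or.inl ⟨hpos, Or.inl rfl⟩)
  · refine stealContra S w hdes c hcP u hu.1 (u, c.2)
      (show u < c.2 by omega) (show c.2 < S.len from ubc)
      (Or.inl rfl) (Or.inr (Or.inr rfl)) (Or.inl rfl) ?_ ?_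
    · show wcPair (w.getD u default) (w.getD c.2 default)
      rw [hb]; exact wc_bcomp _
    · exact sepStealC S q c u hpc hu _ (Or.inl ⟨hpos, Or.inr rfl⟩)
  · refine stealContra S w hdes c hcP u hu.1 (c.1, u)
      (show c.1 < u by omega) (show u < S.len from hu.1.1)
      (Or.inr (Or.inl rfl)) (Or.inl rfl) (Or.inr rfl) ?_ ?_
    · show wcPair (w.getD c.1 default) (w.getD u default)
      rw [hb]; exact wc_bcomp' _
    · exact sepStealC S q c u hpc hu _ (Or.inr ⟨hpos, Or.inl rfl⟩)
  · refine stealContra S w hdes c hcP u hu.1 (c.2, u)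
      (show c.2 < u from hpos) (show u < S.len from hu.1.1)
      (Or.inr (Or.inr rfl)) (Or.inl rfl) (Or.inr rfl) ?_ ?_
    · show wcPair (w.getD c.2 default) (w.getD u default)
      rw [hb]; exact wc_bcomp' _
    · exact sepStealC S q c u hpc hu _ (Or.inr ⟨hpos, Or.inr rfl⟩)

lemma stealRootArc (S : SecStr) (w : List Base)
    (hdes : isDesign wcPair (fun _ _ => (-1 : ℝ)) 1 w S)
    (r : ℕ × ℕ) (hr : r ∈ S.pairs) (hnp : ¬ S.hasParent r)
    (u : ℕ) (hu : S.unpChildOfRoot u)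
    (hend : w.getD r.1 default = bcomp (w.getD u default) ∨
            w.getD r.2 default = bcomp (w.getD u default)) : False := by
  have lr := S.lt r hr
  have ubr := S.ub r hr
  have f3 : r.1 ≠ u ∧ r.2 ≠ u :=
    ⟨fun hh => hu.1.2 ⟨r, hr, Or.inl hh⟩, fun hh => hu.1.2 ⟨r, hr, Or.inr hh⟩⟩
  have f2 : ¬(r.1 < u ∧ u < r.2) := fun hh => hu.2 ⟨r, hr, hh.1, hh.2⟩
  have hpos : u < r.1 ∨ r.2 < u := by omega
  rcases hpos with hpos | hpos <;> rcases hend with hb | hb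
  · refine stealContra S w hdes r hr u hu.1 (u, r.1)
      (show u < r.1 from hpos) (show r.1 < S.len by omega)
      (Or.inl rfl) (Or.inr (Or.inl rfl)) (Or.inl rfl) ?_ ?_
    · show wcPair (w.getD u default) (w.getD r.1 default)
      rw [hb]; exact wc_bcomp _
    · exact sepStealRoot S r u hr hnp hu _ (Or.inl ⟨hpos, Or.inl rfl⟩)
  · refine stealContra S w hdes r hr u hu.1 (u, r.2)
      (show u < r.2 by omega) (show r.2 < S.len from ubr)
      (Or.inl rfl) (Or.inr (Or.inr rfl)) (Or.inl rfl) ?_ ?_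
    · show wcPair (w.getD u default) (w.getD r.2 default)
      rw [hb]; exact wc_bcomp _
    · exact sepStealRoot S r u hr hnp hu _ (Or.inl ⟨hpos, Or.inr rfl⟩)
  · refine stealContra S w hdes r hr u hu.1 (r.1, u)
      (show r.1 < u by omega) (show u < S.len from hu.1.1)
      (Or.inr (Or.inl rfl)) (Or.inl rfl) (Or.inr rfl) ?_ ?_
    · show wcPair (w.getD r.1 default) (w.getD u default)
      rw [hb]; exact wc_bcomp' _
    · exact sepStealRoot S r u hr hnp hu _ (Or.inr ⟨hpos, Or.inl rfl⟩)
  · refine stealContra S w hdes r hr u hu.1 (r.2, u)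
      (show r.2 < u from hpos) (show u < S.len from hu.1.1)
      (Or.inr (Or.inr rfl)) (Or.inl rfl) (Or.inr rfl) ?_ ?_
    · show wcPair (w.getD r.2 default) (w.getD u default)
      rw [hb]; exact wc_bcomp' _
    · exact sepStealRoot S r u hr hnp hu _ (Or.inr ⟨hpos, Or.inr rfl⟩)

lemma afterPigeon (S : SecStr) (w : List Base)
    (hdes : isDesign wcPair (fun _ _ => (-1 : ℝ)) 1 w S)
    (q r r' : ℕ × ℕ) (hq : q ∈ S.pairs)
    (hr : r = q ∨ S.isParentOf q r) (hr' : r' = q ∨ S.isParentOf q r')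
    (hne : r ≠ r')
    (heq : (if r = q then (w.getD q.2 default, w.getD q.1 default)
            else (w.getD r.1 default, w.getD r.2 default)) =
           (if r' = q then (w.getD q.2 default, w.getD q.1 default)
            else (w.getD r'.1 default, w.getD r'.2 default))) : False := by
  rcases hr with hrq | hpc
  · rcases hr' with hrq' | hpc'
    · exact hne (hrq.trans hrq'.symm)
    · have hr'q : r' ≠ q := by
        intro hh
        have e := encl hpc'
        rw [hh] at e
        omega
      rw [if_pos hrq, if_neg hr'q] at heq
      have h1 : w.getD q.2 default = w.getD r'.1 default := (Prod.ext_iff.mp heq).1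
      have h2 : w.getD q.1 default = w.getD r'.2 default := (Prod.ext_iff.mp heq).2
      exact caseB S w hdes q r' hq hpc'.2.1 (encl hpc') h1.symm h2.symm (sepPC S q r' hpc')
  · have hrq : r ≠ q := by
      intro hh
      have e := encl hpc
      rw [hh] at e
      omega
    rcases hr' with hrq' | hpc'
    · rw [if_neg hrq, if_pos hrq'] at heq
      have h1 : w.getD r.1 default = w.getD q.2 default := (Prod.ext_iff.mp heq).1
      have h2 : w.getD r.2 default = w.getD q.1 default := (Prod.ext_iff.mp heq).2
      exact caseB S w hdes q r hq hpc.2.1 (encl hpc) h1 h2 (sepPC S q r hpc)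
    · have hr'q : r' ≠ q := by
        intro hh
        have e := encl hpc'
        rw [hh] at e
        omega
      rw [if_neg hrq, if_neg hr'q] at heq
      have h1 : w.getD r.1 default = w.getD r'.1 default := (Prod.ext_iff.mp heq).1
      have h2 : w.getD r.2 default = w.getD r'.2 default := (Prod.ext_iff.mp heq).2
      have e1 := encl hpc
      have e2 := encl hpc'
      have t := aux_tri S hpc.2.1 hpc'.2.1 hne
      have n1 : ¬(r.1 < r'.1 ∧ r'.2 < r.2) := fun hh =>
        hpc'.2.2.2 ⟨r, hpc.2.1, ⟨e1.1, e1.2⟩, hh.1, hh.2⟩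
      have n2 : ¬(r'.1 < r.1 ∧ r.2 < r'.2) := fun hh =>
        hpc.2.2.2 ⟨r', hpc'.2.1, ⟨e2.1, e2.2⟩, hh.1, hh.2⟩
      rcases t with ht | ht | ht | ht
      · exact caseA S w hdes r r' hpc.2.1 hpc'.2.1 ht h1 h2
          (sepChildren S q r r' hpc hpc' ht)
      · exact caseA S w hdes r' r hpc'.2.1 hpc.2.1 ht h1.symm h2.symm
          (sepChildren S q r' r hpc' hpc ht)
      · exact n1 ht
      · exact n2 ht

lemma afterPigeonRoot (S : SecStr) (w : List Base)
    (hdes : isDesign wcPair (fun _ _ => (-1 : ℝ)) 1 w S)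
    (r r' : ℕ × ℕ) (hrP : r ∈ S.pairs) (hnp : ¬ S.hasParent r)
    (hr'P : r' ∈ S.pairs) (hnp' : ¬ S.hasParent r') (hne : r ≠ r')
    (heq : (w.getD r.1 default, w.getD r.2 default) =
           (w.getD r'.1 default, w.getD r'.2 default)) : False := by
  have h1 : w.getD r.1 default = w.getD r'.1 default := (Prod.ext_iff.mp heq).1
  have h2 : w.getD r.2 default = w.getD r'.2 default := (Prod.ext_iff.mp heq).2
  have t := aux_tri S hrP hr'P hne
  have n1 : ¬(r.1 < r'.1 ∧ r'.2 < r.2) := fun hh => hnp' ⟨r, hrP, hh.1, hh.2⟩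
  have n2 : ¬(r'.1 < r.1 ∧ r.2 < r'.2) := fun hh => hnp ⟨r', hr'P, hh.1, hh.2⟩
  rcases t with ht | ht | ht | ht
  · exact caseA S w hdes r r' hrP hr'P ht h1 h2 (sepTop S r r' hrP hr'P hnp hnp' ht)
  · exact caseA S w hdes r' r hr'P hrP ht h1.symm h2.symm
      (sepTop S r' r hr'P hrP hnp' hnp ht)
  · exact n1 ht
  · exact n2 ht

lemma pigeonRoot (S : SecStr) (w : List Base)
    (hdes : isDesign wcPair (fun _ _ => (-1 : ℝ)) 1 w S)
    (t : Finset (Base × Base))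
    (hcard : t.card < (S.pairs.filter (fun p => ¬ S.hasParent p)).card)
    (hmap : ∀ c ∈ S.pairs, ¬ S.hasParent c →
      (w.getD c.1 default, w.getD c.2 default) ∈ t) : False := by
  have hmaps : ∀ x ∈ S.pairs.filter (fun p => ¬ S.hasParent p),
      (fun x : ℕ × ℕ => (w.getD x.1 default, w.getD x.2 default)) x ∈ t := by
    intro x hx
    exact hmap x (Finset.mem_filter.mp hx).1 (Finset.mem_filter.mp hx).2
  obtain ⟨r, hrs, r', hrs', hne, heq⟩ :=
    Finset.exists_ne_map_eq_of_card_lt_of_maps_to hcard hmaps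
  exact afterPigeonRoot S w hdes r r' (Finset.mem_filter.mp hrs).1
    (Finset.mem_filter.mp hrs).2 (Finset.mem_filter.mp hrs').1
    (Finset.mem_filter.mp hrs').2 hne heq

lemma pigeonNode (S : SecStr) (w : List Base)
    (hdes : isDesign wcPair (fun _ _ => (-1 : ℝ)) 1 w S)
    (q : ℕ × ℕ) (hq : q ∈ S.pairs) (t : Finset (Base × Base))
    (hcard : t.card < (S.pairs.filter (fun c => S.isParentOf q c)).card + 1)
    (hmapq : (w.getD q.2 default, w.getD q.1 default) ∈ t)
    (hmapc : ∀ c ∈ S.pairs, S.isParentOf q c →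
      (w.getD c.1 default, w.getD c.2 default) ∈ t) : False := by
  have hps : q ∉ S.pairs.filter (fun c => S.isParentOf q c) := by
    intro hmem
    have e : q.1 < q.1 ∧ q.2 < q.2 := (Finset.mem_filter.mp hmem).2.2.2.1
    omega
  have hcard' : t.card < (insert q (S.pairs.filter (fun c => S.isParentOf q c))).card := by
    rw [Finset.card_insert_of_notMem hps]; exact hcard
  have hmaps : ∀ x ∈ insert q (S.pairs.filter (fun c => S.isParentOf q c)),
      (fun x : ℕ × ℕ => if x = q then (w.getD q.2 default, w.getD q.1 default)
        else (w.getD x.1 default, w.getD x.2 default)) x ∈ t := by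
    intro x hx
    by_cases hxq : x = q
    · simp only [if_pos hxq]; exact hmapq
    · simp only [if_neg hxq]
      rcases Finset.mem_insert.mp hx with hh | hh
      · exact absurd hh hxq
      · exact hmapc x (Finset.mem_filter.mp hh).1 (Finset.mem_filter.mp hh).2
  obtain ⟨r, hrs, r', hrs', hne, heq⟩ :=
    Finset.exists_ne_map_eq_of_card_lt_of_maps_to hcard' hmaps
  have hr : r = q ∨ S.isParentOf q r := by
    rcases Finset.mem_insert.mp hrs with hh | hh
    · exact Or.inl hh
    · exact Or.inr (Finset.mem_filter.mp hh).2
  have hr' : r' = q ∨ S.isParentOf q r' := by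
    rcases Finset.mem_insert.mp hrs' with hh | hh
    · exact Or.inl hh
    · exact Or.inr (Finset.mem_filter.mp hh).2
  exact afterPigeon S w hdes q r r' hq hr hr' hne heq

/-- any structure containing motif m₅ or motif m₃∘ is not
designable over {A,U,C,G} in the Watson-Crick model. -/
theorem stmt12 (S : SecStr) (h : hasM5 S ∨ hasM3o S) :
    ¬ ∃ w : List Base, isDesign wcPair (fun _ _ => (-1 : ℝ)) 1 w S := by
  rintro ⟨w, hdes⟩
  have hcomp := hdes.1.2
  rcases h with h5 | h3
  · rcases h5 with hroot | ⟨p, hp, hdeg⟩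
    · refine pigeonRoot S w hdes t4 ?_ ?_
      · rw [card_t4]; exact hroot
      · intro c hc _
        exact mem_t4 (hcomp c hc)
    · refine pigeonNode S w hdes p hp t4 ?_ ?_ ?_
      · rw [card_t4]
        have hd2 : 4 < (S.pairs.filter (fun c => S.isParentOf p c)).card + 1 := by
          unfold SecStr.pairDeg at hdeg
          split_ifs at hdeg <;> omega
        exact hd2
      · exact mem_t4 (wc_symm (hcomp p hp))
      · intro c hc _
        exact mem_t4 (hcomp c hc)
  · rcases h3 with ⟨q, hq, ⟨u, hu⟩, hdeg⟩ | ⟨⟨u, hu⟩, hdeg⟩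
    · by_cases hst : ∃ r, (r = q ∨ S.isParentOf q r) ∧
          (w.getD r.1 default = bcomp (w.getD u default) ∨
           w.getD r.2 default = bcomp (w.getD u default))
      · obtain ⟨r, hr, hend⟩ := hst
        rcases hr with hrq | hpc
        · rw [hrq] at hend
          exact stealNodeArc S w hdes q hq u hu hend
        · exact stealChildArc S w hdes q r hpc u hu hend
      · push_neg at hst
        refine pigeonNode S w hdes q hq (t2 (w.getD u default)) ?_ ?_ ?_
        · rw [card_t2]
          have hd2 : 2 < (S.pairs.filter (fun c => S.isParentOf q c)).card + 1 := by
            unfold SecStr.pairDeg at hdeg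
            split_ifs at hdeg <;> omega
          exact hd2
        · have hw := hcomp q hq
          have hq2 := hst q (Or.inl rfl)
          refine mem_t2 (wc_symm hw) ?_ hq2.2
          intro hcon
          exact hq2.1 (by rw [wc_eq_bcomp (wc_symm hw), hcon])
        · intro c hc hpc
          have hw := hcomp c hc
          have hc2 := hst c (Or.inr hpc)
          refine mem_t2 hw ?_ hc2.1
          intro hcon
          exact hc2.2 (by rw [wc_eq_bcomp hw, hcon])
    · by_cases hst : ∃ r ∈ S.pairs, ¬ S.hasParent r ∧
          (w.getD r.1 default = bcomp (w.getD u default) ∨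
           w.getD r.2 default = bcomp (w.getD u default))
      · obtain ⟨r, hrP, hnp, hend⟩ := hst
        exact stealRootArc S w hdes r hrP hnp u hu hend
      · push_neg at hst
        refine pigeonRoot S w hdes (t2 (w.getD u default)) ?_ ?_
        · rw [card_t2]; exact hdeg
        · intro c hc hncp
          have hw := hcomp c hc
          have hc2 := hst c hc hncp
          refine mem_t2 hw ?_ hc2.1
          intro hcon
          exact hc2.2 (by rw [wc_eq_bcomp hw, hcon])
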